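/- Let p be an odd prime, c coprime to p, and H < p a positive integer. Suppose no box B(X,Y;H) of side length H contains two points of the modular hyperbola x*y ≡ c (mod p). Then for all 1 ≤ b1 < b2 ≤ H/2, the residue c*(b̄1 - b̄2) mod p is not congruent to any l with 1 ≤ l ≤ H, where b̄i is the inverse of bi mod p. -/

import Mathlib

/-- `x` lies (as a residue mod `p`) in the interval `[X+1, X+H]` taken mod `p`. -/
def InBox (p : ℕ) (X H : ℤ) (x : ZMod p) : Prop :=
  ∃ t : ℤ, X + 1 ≤ t ∧ t ≤ X + H ∧ (t : ZMod p) = x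

namespace Stmt5Aux

lemma intCast_ne_zero (p : ℕ) [Fact p.Prime] {m : ℤ} (h1 : 0 < m) (h2 : m < (p : ℤ)) :
    (m : ZMod p) ≠ 0 := by
  intro h
  rw [ZMod.intCast_zmod_eq_zero_iff_dvd] at h
  have := Int.le_of_dvd h1 h
  omega

lemma prod4_ne (p : ℕ) [Fact p.Prime] {w x y z : ℤ}
    (hw1 : 0 < w) (hw2 : w < (p : ℤ)) (hx1 : 0 < x) (hx2 : x < (p : ℤ))
    (hy1 : 0 < y) (hy2 : y < (p : ℤ)) (hz1 : 0 < z) (hz2 : z < (p : ℤ)) :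
    ((w * x * y * z : ℤ) : ZMod p) ≠ 0 := by
  have hp : Prime ((p : ℕ) : ℤ) := Nat.prime_iff_prime_int.mp Fact.out
  intro h
  rw [ZMod.intCast_zmod_eq_zero_iff_dvd] at h
  rcases hp.dvd_mul.mp h with h' | h'
  · rcases hp.dvd_mul.mp h' with h'' | h''
    · rcases hp.dvd_mul.mp h'' with h3 | h3
      · have := Int.le_of_dvd hw1 h3; omega
      · have := Int.le_of_dvd hx1 h3; omega
    · have := Int.le_of_dvd hy1 h''; omega
  · have := Int.le_of_dvd hz1 h'; omega

lemma nonsquare_pow (p : ℕ) [Fact p.Prime] (hp : p % 2 = 1) {a : ZMod p}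
    (ha : ¬ IsSquare a) : a ^ (p / 2) = -1 := by
  have ha0 : a ≠ 0 := by rintro rfl; exact ha ⟨0, by ring⟩
  have h1 : a ^ (p / 2) ≠ 1 := fun h => ha ((ZMod.euler_criterion p ha0).mpr h)
  have hple : 2 ≤ p := (Fact.out : p.Prime).two_le
  have h2 : a ^ (p / 2) * a ^ (p / 2) = 1 := by
    rw [← pow_add]
    have hd : p / 2 + p / 2 = p - 1 := by omega
    rw [hd]
    exact ZMod.pow_card_sub_one_eq_one ha0
  rcases mul_self_eq_one_iff.mp h2 with h | h
  · exact absurd h h1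
  · exact h

lemma quad_root {F : Type*} [Field F] {A B C s : F} (hA : A ≠ 0) (h2 : (2 : F) ≠ 0)
    (hs : s * s = B ^ 2 - 4 * A * C) : ∃ x : F, A * x ^ 2 + B * x + C = 0 := by
  refine ⟨(s - B) / (2 * A), ?_⟩
  have h2A : (2 : F) * A ≠ 0 := mul_ne_zero h2 hA
  field_simp
  linear_combination hs

lemma box_contra (p : ℕ) [Fact p.Prime] (c H : ℤ) (hH : 1 ≤ H) (hHp : H < (p : ℤ))
    (hyp : ∀ X Y : ℤ, ¬ ∃ x1 y1 x2 y2 : ZMod p,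
      x1 * y1 = (c : ZMod p) ∧ x2 * y2 = (c : ZMod p) ∧ (x1, y1) ≠ (x2, y2) ∧
      InBox p X H x1 ∧ InBox p Y H y1 ∧ InBox p X H x2 ∧ InBox p Y H y2)
    (a e : ℤ) (ha1 : 1 ≤ a) (haH : a ≤ H - 1) (he1 : 1 ≤ e) (heH : e ≤ H - 1)
    (X1 X2 : ZMod p) (hX1 : X1 ≠ 0) (hX2 : X2 ≠ 0) (hsum : X2 = X1 + (a : ZMod p))
    (heq : (c : ZMod p) * X1⁻¹ - (c : ZMod p) * X2⁻¹ = (e : ZMod p)) : False := by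
  haveI : NeZero p := ⟨(Fact.out : p.Prime).ne_zero⟩
  set y1 : ZMod p := (c : ZMod p) * X1⁻¹ with hy1
  set y2 : ZMod p := (c : ZMod p) * X2⁻¹ with hy2
  apply hyp ((X1.val : ℤ) - 1) ((y2.val : ℤ) - 1)
  have hane : ((a : ℤ) : ZMod p) ≠ 0 := intCast_ne_zero p (by omega) (by omega)
  refine ⟨X1, y1, X2, y2, ?_, ?_, ?_, ?_, ?_, ?_, ?_⟩
  · rw [hy1]; field_simp
  · rw [hy2]; field_simp
  · intro hpair
    have hx : X1 = X2 := congrArg Prod.fst hpair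
    rw [hsum] at hx
    exact hane (by linear_combination -hx)
  · exact ⟨(X1.val : ℤ), by omega, by omega, by push_cast; simp [ZMod.natCast_val, ZMod.cast_id]⟩
  · refine ⟨(y2.val : ℤ) + e, by omega, by omega, ?_⟩
    push_cast
    rw [ZMod.natCast_val, ZMod.cast_id]
    linear_combination -heq
  · refine ⟨(X1.val : ℤ) + a, by omega, by omega, ?_⟩
    push_cast
    rw [ZMod.natCast_val, ZMod.cast_id]
    rw [hsum]
  · exact ⟨(y2.val : ℤ), by omega, by omega, by push_cast; simp [ZMod.natCast_val, ZMod.cast_id]⟩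

lemma branch (p : ℕ) [Fact p.Prime] (c H : ℤ) (hH : 1 ≤ H) (hHp : H < (p : ℤ))
    (hyp : ∀ X Y : ℤ, ¬ ∃ x1 y1 x2 y2 : ZMod p,
      x1 * y1 = (c : ZMod p) ∧ x2 * y2 = (c : ZMod p) ∧ (x1, y1) ≠ (x2, y2) ∧
      InBox p X H x1 ∧ InBox p Y H y1 ∧ InBox p X H x2 ∧ InBox p Y H y2)
    (b1 b2 : ℤ) (hb1 : 1 ≤ b1) (hb12 : b1 < b2) (hb2 : 2 * b2 ≤ H)
    (hcd : (c : ZMod p) * ((b2 - b1 : ℤ) : ZMod p) = ((H * b1 * b2 : ℤ) : ZMod p))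
    (a e : ℤ) (ha1 : 1 ≤ a) (haH : a ≤ H - 1) (he1 : 1 ≤ e) (heH : e ≤ H - 1)
    (hsq : IsSquare (((e * (b2 - b1) * a) * (e * (b2 - b1) * a + 4 * (H * b1 * b2)) : ℤ) :
      ZMod p)) : False := by
  have hd0 : ((b2 - b1 : ℤ) : ZMod p) ≠ 0 := intCast_ne_zero p (by omega) (by omega)
  have he0 : ((e : ℤ) : ZMod p) ≠ 0 := intCast_ne_zero p (by omega) (by omega)
  have h20 : ((2 : ℤ) : ZMod p) ≠ 0 := intCast_ne_zero p (by norm_num) (by omega)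
  have h20' : (2 : ZMod p) ≠ 0 := by exact_mod_cast h20
  set F := ZMod p
  set d' : F := ((b2 - b1 : ℤ) : ZMod p) with hd'
  set e' : F := ((e : ℤ) : ZMod p) with he'
  set a' : F := ((a : ℤ) : ZMod p) with ha'
  set h' : F := ((H * b1 * b2 : ℤ) : ZMod p) with hh'
  set c' : F := ((c : ℤ) : ZMod p) with hc'
  have hA : e' * d' ≠ 0 := mul_ne_zero he0 hd0
  obtain ⟨s, hs⟩ := hsq
  have hdisc : s * s = (e' * d' * a') ^ 2 - 4 * (e' * d') * (-(h' * a')) := by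
    rw [← hs]; rw [hd', he', ha', hh']; push_cast; ring
  obtain ⟨x, hx⟩ := quad_root hA h20' hdisc
  have hC : h' * a' ≠ 0 := by
    rw [hh', ha']
    have := prod4_ne p (show (0:ℤ) < H by omega) hHp (show (0:ℤ) < b1 by omega)
      (show b1 < (p:ℤ) by omega) (show (0:ℤ) < b2 by omega) (show b2 < (p:ℤ) by omega)
      (show (0:ℤ) < a by omega) (show a < (p:ℤ) by omega)
    intro h0
    apply this
    push_cast at h0 ⊢
    linear_combination h0
  have hx0 : x ≠ 0 := by
    rintro rfl
    apply hC
    linear_combination -hx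
  have hxa : x + a' ≠ 0 := by
    intro h0
    have hxx : x = -a' := by linear_combination h0
    rw [hxx] at hx
    apply hC
    linear_combination -hx
  have key : e' * x * (x + a') = c' * a' := by
    have h5 : d' * (e' * x * (x + a') - c' * a') = 0 := by
      linear_combination hx - a' * hcd
    rcases mul_eq_zero.mp h5 with h6 | h6
    · exact absurd h6 hd0
    · linear_combination h6
  refine box_contra p c H hH hHp hyp a e ha1 haH he1 heH x (x + a') hx0 hxa rfl ?_
  show c' * x⁻¹ - c' * (x + a')⁻¹ = e'
  have i1 : x * x⁻¹ = 1 := mul_inv_cancel₀ hx0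
  have i2 : (x + a') * (x + a')⁻¹ = 1 := mul_inv_cancel₀ hxa
  linear_combination -(x⁻¹ * (x + a')⁻¹) * key + (e' * (x + a') * (x + a')⁻¹ + c' * (x + a')⁻¹) * i1
    + (e' - c' * x⁻¹) * i2

end Stmt5Aux

open Stmt5Aux in
theorem stmt_5 (p : ℕ) [Fact p.Prime] (hodd : Odd p) (c : ℤ)
    (hc : IsCoprime c (p : ℤ)) (H : ℤ) (hH : 1 ≤ H) (hHp : H < p)
    (hyp : ∀ X Y : ℤ, ¬ ∃ x1 y1 x2 y2 : ZMod p,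
      x1 * y1 = (c : ZMod p) ∧ x2 * y2 = (c : ZMod p) ∧ (x1, y1) ≠ (x2, y2) ∧
      InBox p X H x1 ∧ InBox p Y H y1 ∧ InBox p X H x2 ∧ InBox p Y H y2) :
    ∀ b1 b2 bbar1 bbar2 l : ℤ, 1 ≤ b1 → b1 < b2 → 2 * b2 ≤ H →
      b1 * bbar1 ≡ 1 [ZMOD (p : ℤ)] → b2 * bbar2 ≡ 1 [ZMOD (p : ℤ)] →
      1 ≤ l → l ≤ H → ¬ (c * (bbar1 - bbar2) ≡ l [ZMOD (p : ℤ)]) := by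
  intro b1 b2 bbar1 bbar2 l hb1 hb12 hb2H hbar1 hbar2 hl1 hlH hcon
  have hH4 : 4 ≤ H := by omega
  have hp5 : (5 : ℤ) ≤ (p : ℤ) := by omega
  have hbar1' : (b1 : ZMod p) * (bbar1 : ZMod p) = 1 := by
    have h := (ZMod.intCast_eq_intCast_iff (b1 * bbar1) 1 p).mpr hbar1
    push_cast at h; exact h
  have hbar2' : (b2 : ZMod p) * (bbar2 : ZMod p) = 1 := by
    have h := (ZMod.intCast_eq_intCast_iff (b2 * bbar2) 1 p).mpr hbar2
    push_cast at h; exact h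
  have hcon' : (c : ZMod p) * ((bbar1 : ZMod p) - (bbar2 : ZMod p)) = (l : ZMod p) := by
    have h := (ZMod.intCast_eq_intCast_iff (c * (bbar1 - bbar2)) l p).mpr hcon
    push_cast at h; exact h
  have hb1ne : ((b1 : ℤ) : ZMod p) ≠ 0 := intCast_ne_zero p (by omega) (by omega)
  have hb2ne : ((b2 : ℤ) : ZMod p) ≠ 0 := intCast_ne_zero p (by omega) (by omega)
  have hbb1 : ((b1 : ℤ) : ZMod p)⁻¹ = (bbar1 : ZMod p) := inv_eq_of_mul_eq_one_right hbar1'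
  have hbb2 : ((b2 : ℤ) : ZMod p)⁻¹ = (bbar2 : ZMod p) := inv_eq_of_mul_eq_one_right hbar2'
  have key : (c : ZMod p) * (((b1 : ℤ) : ZMod p)⁻¹ - ((b2 : ℤ) : ZMod p)⁻¹) = (l : ZMod p) := by
    rw [hbb1, hbb2]; exact hcon'
  rcases lt_or_eq_of_le hlH with hlt | hleq
  · -- case l ≤ H - 1 : direct pair (b1, b2)
    exact box_contra p c H hH hHp hyp (b2 - b1) l (by omega) (by omega) hl1 (by omega)
      ((b1 : ℤ) : ZMod p) ((b2 : ℤ) : ZMod p) hb1ne hb2ne (by push_cast; ring)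
      (by linear_combination key)
  · -- case l = H
    rw [hleq] at key
    have h1 : ((b1 : ℤ) : ZMod p) * ((b1 : ℤ) : ZMod p)⁻¹ = 1 := mul_inv_cancel₀ hb1ne
    have h2 : ((b2 : ℤ) : ZMod p) * ((b2 : ℤ) : ZMod p)⁻¹ = 1 := mul_inv_cancel₀ hb2ne
    have hcd : (c : ZMod p) * ((b2 - b1 : ℤ) : ZMod p) = ((H * b1 * b2 : ℤ) : ZMod p) := by
      push_cast
      linear_combination ((b1 : ℤ) : ZMod p) * ((b2 : ℤ) : ZMod p) * key
        - (c : ZMod p) * ((b2 : ℤ) : ZMod p) * h1 + (c : ZMod p) * ((b1 : ℤ) : ZMod p) * h2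
    rcases Int.even_or_odd H with ⟨m, hm⟩ | ⟨k, hk⟩
    · -- H even, H = m + m : use (2*b1, 2*b2) with gap m
      have g1 : ((2 * b1 : ℤ) : ZMod p) ≠ 0 := intCast_ne_zero p (by omega) (by omega)
      have g2 : ((2 * b2 : ℤ) : ZMod p) ≠ 0 := intCast_ne_zero p (by omega) (by omega)
      refine box_contra p c H hH hHp hyp (2 * (b2 - b1)) m (by omega) (by omega) (by omega)
        (by omega) ((2 * b1 : ℤ) : ZMod p) ((2 * b2 : ℤ) : ZMod p) g1 g2
        (by push_cast; ring) ?_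
      rw [hm] at hcd
      push_cast at hcd g1 g2 ⊢
      have i1 : (2 * (b1 : ZMod p)) * (2 * (b1 : ZMod p))⁻¹ = 1 := mul_inv_cancel₀ g1
      have i2 : (2 * (b2 : ZMod p)) * (2 * (b2 : ZMod p))⁻¹ = 1 := mul_inv_cancel₀ g2
      linear_combination 2 * ((2 * (b1 : ZMod p))⁻¹ * (2 * (b2 : ZMod p))⁻¹) * hcd
        + ((m : ZMod p) * (2 * (b2 : ZMod p)) * (2 * (b2 : ZMod p))⁻¹
          + (c : ZMod p) * (2 * (b2 : ZMod p))⁻¹) * i1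
        + ((m : ZMod p) - (c : ZMod p) * (2 * (b1 : ZMod p))⁻¹) * i2
    · -- H odd
      have h2b2 : 2 * b2 ≤ H - 1 := by omega
      by_cases s1 : IsSquare ((((H - (b2 - b1)) * (b2 - b1) * (2 * b2)) *
          ((H - (b2 - b1)) * (b2 - b1) * (2 * b2) + 4 * (H * b1 * b2)) : ℤ) : ZMod p)
      · exact branch p c H hH hHp hyp b1 b2 hb1 hb12 hb2H hcd (2 * b2) (H - (b2 - b1))
          (by omega) (by omega) (by omega) (by omega) s1
      by_cases s2 : IsSquare ((((H - b1 - b2) * (b2 - b1) * (2 * b2)) *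
          ((H - b1 - b2) * (b2 - b1) * (2 * b2) + 4 * (H * b1 * b2)) : ℤ) : ZMod p)
      · exact branch p c H hH hHp hyp b1 b2 hb1 hb12 hb2H hcd (2 * b2) (H - b1 - b2)
          (by omega) (by omega) (by omega) (by omega) s2
      by_cases s3 : IsSquare ((((H - b1 - b2) * (b2 - b1) * (b2 - b1)) *
          ((H - b1 - b2) * (b2 - b1) * (b2 - b1) + 4 * (H * b1 * b2)) : ℤ) : ZMod p)
      · exact branch p c H hH hHp hyp b1 b2 hb1 hb12 hb2H hcd (b2 - b1) (H - b1 - b2)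
          (by omega) (by omega) (by omega) (by omega) s3
      -- Euler criterion contradiction
      have hodd' : p % 2 = 1 := Nat.odd_iff.mp hodd
      have w1 := nonsquare_pow p hodd' s1
      have w2 := nonsquare_pow p hodd' s2
      have w3 := nonsquare_pow p hodd' s3
      set v1 : ℤ := ((H - (b2 - b1)) * (b2 - b1) * (2 * b2)) *
          ((H - (b2 - b1)) * (b2 - b1) * (2 * b2) + 4 * (H * b1 * b2)) with hv1
      set v2 : ℤ := ((H - b1 - b2) * (b2 - b1) * (2 * b2)) *
          ((H - b1 - b2) * (b2 - b1) * (2 * b2) + 4 * (H * b1 * b2)) with hv2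
      set v3 : ℤ := ((H - b1 - b2) * (b2 - b1) * (b2 - b1)) *
          ((H - b1 - b2) * (b2 - b1) * (b2 - b1) + 4 * (H * b1 * b2)) with hv3
      set K : ℤ := ((H - (b2 - b1)) * (b2 - b1) * (2 * b2) +
          (H - b1 - b2) * (b2 - b1) * (2 * b2) + 4 * (H * b1 * b2)) * v3 with hK
      have hring : v1 * v2 * v3 = K ^ 2 := by
        rw [hv1, hv2, hv3, hK]; ring
      have hv : ((v1 : ZMod p) * (v2 : ZMod p) * (v3 : ZMod p)) ^ (p / 2) = -1 := by
        rw [mul_pow, mul_pow, w1, w2, w3]; ring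
      have hcast : (v1 : ZMod p) * (v2 : ZMod p) * (v3 : ZMod p) = (K : ZMod p) ^ 2 := by
        have h := congrArg (fun z : ℤ => (z : ZMod p)) hring
        push_cast at h
        exact h
      rw [hcast] at hv
      have hp5' : 5 ≤ p := by exact_mod_cast hp5
      by_cases hK0 : (K : ZMod p) = 0
      · rw [hK0] at hv
        rw [zero_pow (two_ne_zero), zero_pow (by omega : p / 2 ≠ 0)] at hv
        exact one_ne_zero (by linear_combination hv : (1 : ZMod p) = 0)
      · have hper : ((K : ZMod p) ^ 2) ^ (p / 2) = (K : ZMod p) ^ (p - 1) := by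
          rw [← pow_mul]; congr 1; omega
        rw [hper, ZMod.pow_card_sub_one_eq_one hK0] at hv
        haveI : Fact (2 < p) := ⟨by omega⟩
        exact ZMod.neg_one_ne_one hv.symm
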